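/- Let I be a finite nonempty index set and let q, t, p : I → ℝ satisfy q i > 0, t i > 0 and p i ≥ 0 for all i ∈ I. Set s i = q i + t i + p i. Then for every function D : I → ℝ with 0 < D i < 1 for all i, one has Σ_{i∈I} q i · log(D i) + Σ_{i∈I} (t i + p i) · log(1 − D i) ≤ Σ_{i∈I} q i · log(q i / s i) + Σ_{i∈I} (t i + p i) · log((t i + p i)/ s i), with equality if and only if D i = q i / s i for all i ∈ I. In other words, the objective V(D) = Σ q i log D i + Σ (t i + p i) log(1 − D i) is uniquely maximized by the discriminator D* i = q i/(q i + t i + p i). -/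

import Mathlib

open Real Finset

open Real Finset

lemma key_le (a b x : ℝ) (ha : 0 < a) (hb : 0 < b) (hx0 : 0 < x) (hx1 : x < 1) :
    a * log x + b * log (1 - x) ≤ a * log (a / (a + b)) + b * log (b / (a + b)) := by
  have hc : 0 < a + b := by linarith
  have h1 : a * (log x - log (a / (a + b))) ≤ x * (a + b) - a := by
    have : log x - log (a / (a + b)) = log (x * (a + b) / a) := by
      rw [log_div (by positivity) ha.ne', log_div ha.ne' hc.ne', log_mul hx0.ne' hc.ne']
      ring
    rw [this]
    have hle := Real.log_le_sub_one_of_pos (x := x * (a + b) / a) (by positivity)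
    calc a * log (x * (a + b) / a) ≤ a * (x * (a + b) / a - 1) := by nlinarith
      _ = x * (a + b) - a := by field_simp
  have h2 : b * (log (1 - x) - log (b / (a + b))) ≤ (1 - x) * (a + b) - b := by
    have h1x : 0 < 1 - x := by linarith
    have : log (1 - x) - log (b / (a + b)) = log ((1 - x) * (a + b) / b) := by
      rw [log_div (by positivity) hb.ne', log_div hb.ne' hc.ne', log_mul h1x.ne' hc.ne']
      ring
    rw [this]
    have hle := Real.log_le_sub_one_of_pos (x := (1 - x) * (a + b) / b) (by positivity)
    calc b * log ((1 - x) * (a + b) / b) ≤ b * ((1 - x) * (a + b) / b - 1) := by nlinarith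
      _ = (1 - x) * (a + b) - b := by field_simp
  nlinarith

lemma key_eq (a b x : ℝ) (ha : 0 < a) (hb : 0 < b) (hx0 : 0 < x) (hx1 : x < 1) :
    a * log x + b * log (1 - x) = a * log (a / (a + b)) + b * log (b / (a + b)) ↔
      x = a / (a + b) := by
  have hc : 0 < a + b := by linarith
  constructor
  · intro h
    by_contra hne
    have h1x : 0 < 1 - x := by linarith
    have hy1 : x * (a + b) / a ≠ 1 := by
      intro hy
      apply hne
      field_simp at hy ⊢
      linarith
    have hs1 : a * (log x - log (a / (a + b))) < x * (a + b) - a := by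
      have : log x - log (a / (a + b)) = log (x * (a + b) / a) := by
        rw [log_div (by positivity) ha.ne', log_div ha.ne' hc.ne', log_mul hx0.ne' hc.ne']
        ring
      rw [this]
      have hlt := Real.log_lt_sub_one_of_pos (x := x * (a + b) / a) (by positivity) hy1
      calc a * log (x * (a + b) / a) < a * (x * (a + b) / a - 1) := by nlinarith
        _ = x * (a + b) - a := by field_simp
    have h2 : b * (log (1 - x) - log (b / (a + b))) ≤ (1 - x) * (a + b) - b := by
      have : log (1 - x) - log (b / (a + b)) = log ((1 - x) * (a + b) / b) := by
        rw [log_div (by positivity) hb.ne', log_div hb.ne' hc.ne', log_mul h1x.ne' hc.ne']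
        ring
      rw [this]
      have hle := Real.log_le_sub_one_of_pos (x := (1 - x) * (a + b) / b) (by positivity)
      calc b * log ((1 - x) * (a + b) / b) ≤ b * ((1 - x) * (a + b) / b - 1) := by nlinarith
        _ = (1 - x) * (a + b) - b := by field_simp
    nlinarith
  · intro h
    subst h
    have : (1 : ℝ) - a / (a + b) = b / (a + b) := by field_simp; ring
    rw [this]
/-- Discrete form of Proposition 1: with `q i > 0`, `t i > 0`, `p i ≥ 0` and
`s i = q i + t i + p i`, the objective
`V(D) = Σ q i·log (D i) + Σ (t i + p i)·log (1 − D i)` over discriminators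
`0 < D i < 1` is bounded by its value at `D* i = q i / s i`, with equality
iff `D = D*`. -/
theorem optimal_discriminator {I : Type*} [Fintype I] [Nonempty I]
    (q t p : I → ℝ) (hq : ∀ i, 0 < q i) (ht : ∀ i, 0 < t i) (hp : ∀ i, 0 ≤ p i)
    (s : I → ℝ) (hs : ∀ i, s i = q i + t i + p i) :
    ∀ D : I → ℝ, (∀ i, 0 < D i) → (∀ i, D i < 1) →
      ((∑ i, q i * Real.log (D i)) + ∑ i, (t i + p i) * Real.log (1 - D i) ≤
        (∑ i, q i * Real.log (q i / s i)) +
          ∑ i, (t i + p i) * Real.log ((t i + p i) / s i)) ∧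
      ((∑ i, q i * Real.log (D i)) + (∑ i, (t i + p i) * Real.log (1 - D i)) =
        (∑ i, q i * Real.log (q i / s i)) +
          (∑ i, (t i + p i) * Real.log ((t i + p i) / s i)) ↔
        ∀ i, D i = q i / s i) := by
  intro D hD0 hD1
  have hb : ∀ i, 0 < t i + p i := fun i => by have := ht i; have := hp i; linarith
  have hsab : ∀ i, s i = q i + (t i + p i) := fun i => by rw [hs i]; ring
  have hle : ∀ i ∈ Finset.univ (α := I),
      q i * Real.log (D i) + (t i + p i) * Real.log (1 - D i) ≤
        q i * Real.log (q i / s i) + (t i + p i) * Real.log ((t i + p i) / s i) := by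
    intro i _
    rw [hsab i]
    exact key_le (q i) (t i + p i) (D i) (hq i) (hb i) (hD0 i) (hD1 i)
  rw [← Finset.sum_add_distrib, ← Finset.sum_add_distrib]
  refine ⟨Finset.sum_le_sum hle, ?_⟩
  rw [Finset.sum_eq_sum_iff_of_le hle]
  constructor
  · intro h i
    have := h i (Finset.mem_univ i)
    rw [hsab i] at this ⊢
    exact (key_eq (q i) (t i + p i) (D i) (hq i) (hb i) (hD0 i) (hD1 i)).mp this
  · intro h i _
    have := h i
    rw [hsab i] at this ⊢
    rw [(key_eq (q i) (t i + p i) (D i) (hq i) (hb i) (hD0 i) (hD1 i)).mpr this]
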